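/- Let a ∈ (0,1) and let V and W be dense, countable, i.d.f. subsets of c_a satisfying the independent order property. If G and H are g.e.c. geometric 1-graphs with vertex sets V and W respectively, then G ≅ H. -/

import Mathlib

open Filter Topology Set

/-- The sup-norm distance between two real sequences. -/
noncomputable def supDist (x y : ℕ → ℝ) : ℝ := ⨆ n, |x n - y n|

/-- A subset of `c_a` is integer-distance-free (only finite coordinates considered). -/
def IDFSetA (A : Set (ℕ → ℝ)) : Prop :=
  (∀ x ∈ A, ∀ n, ∀ k : ℤ, x n ≠ (k : ℝ)) ∧
  (∀ x ∈ A, ∀ y ∈ A, x ≠ y → ∀ n, ∀ k : ℤ, x n - y n ≠ (k : ℝ))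

/-- The independent order property for a subset of `c_a`: any finite injective tuple of its
points realizes, in suitable distinct coordinate positions, any finite list of orderings of
the fractional parts (orderings encoded by permutations giving the increasing enumeration). -/
def HasIOPSet (A : Set (ℕ → ℝ)) : Prop :=
  ∀ (k : ℕ) (pts : Fin k → (ℕ → ℝ)), (∀ m, pts m ∈ A) → Function.Injective pts →
  ∀ (N : ℕ) (ord : Fin N → Equiv.Perm (Fin k)),
  ∃ j : Fin N → ℕ, Function.Injective j ∧
    ∀ (ℓ : Fin N) (m n : Fin k),
      m < n ↔ Int.fract (pts (ord ℓ m) (j ℓ)) < Int.fract (pts (ord ℓ n) (j ℓ))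

/-- Threshold 1. -/
def Threshold1 {V : Set (ℕ → ℝ)} (G : SimpleGraph V) : Prop :=
  ∀ u v : V, G.Adj u v → supDist u v < 1

/-- Geometric existential closure at level 1. -/
def GEC {V : Set (ℕ → ℝ)} (G : SimpleGraph V) : Prop :=
  ∀ δ' : ℝ, 0 < δ' → δ' < 1 → ∀ x : V, ∀ A B : Finset V, Disjoint A B →
    (∀ w : V, w ∈ A ∨ w ∈ B → supDist x w < 1) →
    ∃ z : V, z ∉ A ∧ z ∉ B ∧ z ≠ x ∧
      (∀ a ∈ A, G.Adj z a) ∧ (∀ b ∈ B, ¬ G.Adj z b) ∧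
      (∀ w : V, w ∈ A ∨ w ∈ B → supDist z w < 1) ∧ supDist x z < δ'


section Aux
variable {a : ℝ}


lemma tendsto_sub_zero {x y : ℕ → ℝ} (hx : Tendsto x atTop (nhds a))
    (hy : Tendsto y atTop (nhds a)) : Tendsto (fun n => |x n - y n|) atTop (nhds 0) := by
  have h := (hx.sub hy)
  rw [sub_self] at h
  simpa using h.abs

lemma bddAbove_diff {x y : ℕ → ℝ} (hx : Tendsto x atTop (nhds a))
    (hy : Tendsto y atTop (nhds a)) : BddAbove (Set.range fun n => |x n - y n|) :=
  (tendsto_sub_zero hx hy).bddAbove_range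

lemma coord_le_supDist {x y : ℕ → ℝ} (hx : Tendsto x atTop (nhds a))
    (hy : Tendsto y atTop (nhds a)) (n : ℕ) : |x n - y n| ≤ supDist x y :=
  le_ciSup (bddAbove_diff hx hy) n

lemma supDist_le {x y : ℕ → ℝ} (c : ℝ) (hc : 0 ≤ c) (h : ∀ n, |x n - y n| ≤ c) :
    supDist x y ≤ c := by
  refine Real.iSup_le (fun n => h n) hc

lemma supDist_lt_one {x y : ℕ → ℝ} (hx : Tendsto x atTop (nhds a))
    (hy : Tendsto y atTop (nhds a)) (h : ∀ n, |x n - y n| < 1) : supDist x y < 1 := by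
  have h0 := tendsto_sub_zero hx hy
  have hev : ∀ᶠ n in atTop, |x n - y n| < 1/2 := by
    have := h0.eventually (eventually_lt_nhds (by norm_num : (0:ℝ) < 1/2))
    simpa using this
  obtain ⟨T, hT⟩ := eventually_atTop.1 hev
  set M : ℝ := ((Finset.range (T+1)).image fun n => |x n - y n|).max' (by simp) with hM
  have hMlt : M < 1 := by
    have := Finset.max'_mem (((Finset.range (T+1)).image fun n => |x n - y n|)) (by simp)
    rw [← hM] at this
    obtain ⟨n, _, hn⟩ := Finset.mem_image.1 this
    rw [← hn]; exact h n
  have hbound : ∀ n, |x n - y n| ≤ max M (1/2) := by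
    intro n
    rcases le_or_gt n T with hn | hn
    · have hmem : |x n - y n| ∈ ((Finset.range (T+1)).image fun n => |x n - y n|) :=
        Finset.mem_image.2 ⟨n, Finset.mem_range.2 (Nat.lt_succ_of_le hn), rfl⟩
      exact le_trans (Finset.le_max' _ _ hmem) (le_max_left _ _)
    · exact le_trans (hT n hn.le).le (le_max_right _ _)
  have : supDist x y ≤ max M (1/2) := by
    refine supDist_le _ ?_ hbound
    exact le_trans (by norm_num) (le_max_right _ _)
  exact lt_of_le_of_lt this (by rw [max_lt_iff]; exact ⟨hMlt, by norm_num⟩)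

lemma one_lt_supDist {x y : ℕ → ℝ} (hx : Tendsto x atTop (nhds a))
    (hy : Tendsto y atTop (nhds a)) (n : ℕ) (h : 1 < |x n - y n|) : 1 < supDist x y :=
  lt_of_lt_of_le h (coord_le_supDist hx hy n)

lemma supDist_triangle {x y z : ℕ → ℝ} (hx : Tendsto x atTop (nhds a))
    (hy : Tendsto y atTop (nhds a)) (hz : Tendsto z atTop (nhds a)) :
    supDist x z ≤ supDist x y + supDist y z := by
  refine supDist_le _ ?_ (fun n => ?_)
  · have : (0:ℝ) ≤ supDist x y := le_trans (abs_nonneg _) (coord_le_supDist hx hy 0)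
    have h2 : (0:ℝ) ≤ supDist y z := le_trans (abs_nonneg _) (coord_le_supDist hy hz 0)
    linarith
  · calc |x n - z n| ≤ |x n - y n| + |y n - z n| := abs_sub_le _ _ _
      _ ≤ supDist x y + supDist y z :=
        add_le_add (coord_le_supDist hx hy n) (coord_le_supDist hy hz n)

lemma supDist_symm (x y : ℕ → ℝ) : supDist x y = supDist y x := by
  unfold supDist
  congr 1; funext n; rw [abs_sub_comm]

-- floor/fract toolkit
lemma floor_sub_eq {s t : ℝ} (h : Int.fract s ≠ Int.fract t) :
    ⌊s - t⌋ = ⌊s⌋ - ⌊t⌋ - (if Int.fract s < Int.fract t then 1 else 0) := by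
  have hs : (⌊s⌋ : ℝ) + Int.fract s = s := Int.floor_add_fract s
  have ht : (⌊t⌋ : ℝ) + Int.fract t = t := Int.floor_add_fract t
  have h1s := Int.fract_lt_one s
  have h0s := Int.fract_nonneg s
  have h1t := Int.fract_lt_one t
  have h0t := Int.fract_nonneg t
  by_cases hlt : Int.fract s < Int.fract t
  · rw [if_pos hlt]
    refine Int.floor_eq_iff.2 ⟨?_, ?_⟩ <;> push_cast <;> linarith
  · rw [if_neg hlt]
    have : Int.fract t < Int.fract s := lt_of_le_of_ne (not_lt.1 hlt) (Ne.symm h)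
    refine Int.floor_eq_iff.2 ⟨?_, ?_⟩ <;> push_cast <;> linarith


lemma floor_mem_pair_of_abs_lt_one {u : ℝ} (h : |u| < 1) : ⌊u⌋ = 0 ∨ ⌊u⌋ = -1 := by
  rw [abs_lt] at h
  have h1 : ⌊u⌋ < 1 := Int.floor_lt.2 (by exact_mod_cast h.2)
  have h2 : (-1 : ℤ) ≤ ⌊u⌋ := Int.le_floor.2 (by push_cast; linarith [h.1])
  omega

lemma abs_lt_one_of_floor_pair {u : ℝ} (hni : ∀ z : ℤ, u ≠ z)
    (h : ⌊u⌋ = 0 ∨ ⌊u⌋ = -1) : |u| < 1 := by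
  rcases h with h | h
  · have h1 : (0:ℝ) ≤ u := by
      have := Int.floor_le u; rw [h] at this; exact_mod_cast this
    have h2 : u < 1 := by
      have := Int.lt_floor_add_one u; rw [h] at this; push_cast at this; linarith
    rw [abs_lt]; constructor <;> linarith
  · have h1 : (-1:ℝ) ≤ u := by
      have := Int.floor_le u; rw [h] at this; exact_mod_cast this
    have h2 : u < 0 := by
      have := Int.lt_floor_add_one u; rw [h] at this; push_cast at this; linarith
    have h3 : u ≠ -1 := by have := hni (-1); push_cast at this; exact this
    rw [abs_lt]; exact ⟨lt_of_le_of_ne h1 (Ne.symm h3), by linarith⟩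

lemma one_lt_abs_of_not {u : ℝ} (hni : ∀ z : ℤ, u ≠ z) (h : ¬ |u| < 1) : 1 < |u| := by
  rcases lt_trichotomy |u| 1 with h' | h' | h'
  · exact absurd h' h
  · exfalso
    rcases abs_eq (by norm_num : (0:ℝ) ≤ 1) |>.1 h' with h'' | h''
    · exact hni 1 (by exact_mod_cast h'')
    · exact hni (-1) (by push_cast; exact h'')
  · exact h'

lemma abs_sub_lt_one_of_floor_eq {p q : ℝ} (h : ⌊p⌋ = ⌊q⌋) : |p - q| < 1 := by
  have hp : (⌊p⌋ : ℝ) + Int.fract p = p := Int.floor_add_fract p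
  have hq : (⌊q⌋ : ℝ) + Int.fract q = q := Int.floor_add_fract q
  have h1 := Int.fract_lt_one p
  have h0 := Int.fract_nonneg p
  have h1' := Int.fract_lt_one q
  have h0' := Int.fract_nonneg q
  have e1 : Int.fract p = p - ⌊p⌋ := by rw [Int.fract]
  have e2 : Int.fract q = q - ⌊q⌋ := by rw [Int.fract]
  have hc : ((⌊p⌋:ℤ):ℝ) = ((⌊q⌋:ℤ):ℝ) := by exact_mod_cast h
  rw [abs_lt]; constructor <;> nlinarith [e1, e2]

lemma iop_extract {A : Set (ℕ → ℝ)} (hiop : HasIOPSet A) {k : ℕ} (pts : Fin k → (ℕ → ℝ))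
    (hmem : ∀ m, pts m ∈ A) (hinj : Function.Injective pts) (σ : Equiv.Perm (Fin k))
    (S : Finset ℕ) (T : ℕ) :
    ∃ m, m ∉ S ∧ T ≤ m ∧ ∀ u v : Fin k,
      u < v ↔ Int.fract (pts (σ u) m) < Int.fract (pts (σ v) m) := by
  obtain ⟨j, hjinj, hj⟩ := hiop k pts hmem hinj (S.card + T + 1) (fun _ => σ)
  set bad : Finset ℕ := S ∪ Finset.range T with hbad
  have hcard : bad.card < (Finset.univ.image j).card := by
    have h1 : bad.card ≤ S.card + T := by
      refine le_trans (Finset.card_union_le _ _) ?_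
      simp
    have h2 : (Finset.univ.image j).card = S.card + T + 1 := by
      rw [Finset.card_image_of_injective _ hjinj, Finset.card_univ, Fintype.card_fin]
    omega
  have hns : ¬ (Finset.univ.image j ⊆ bad) := fun hsub => absurd (Finset.card_le_card hsub) (by omega)
  obtain ⟨m, hm1, hm2⟩ := Finset.not_subset.1 hns
  obtain ⟨ℓ, _, rfl⟩ := Finset.mem_image.1 hm1
  rw [hbad, Finset.mem_union, not_or, Finset.mem_range, not_lt] at hm2
  exact ⟨j ℓ, hm2.1, hm2.2, fun u v => hj ℓ u v⟩

lemma exists_sort_perm {k : ℕ} (f : Fin k → ℝ) (hf : ∀ i j, i ≠ j → f i ≠ f j) :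
    ∃ σ : Equiv.Perm (Fin k), ∀ u v, u < v ↔ f (σ u) < f (σ v) := by
  refine ⟨Tuple.sort f, ?_⟩
  have hmono : Monotone (f ∘ Tuple.sort f) := Tuple.monotone_sort f
  have hinj : Function.Injective (f ∘ Tuple.sort f) := by
    intro u v huv
    by_contra hne
    have hne' : Tuple.sort f u ≠ Tuple.sort f v := fun hh => hne (Equiv.injective _ hh)
    exact hf _ _ hne' huv
  have hsm : StrictMono (f ∘ Tuple.sort f) := hmono.strictMono_of_injective hinj
  exact fun u v => ⟨fun h => hsm h, fun h => hsm.lt_iff_lt.1 h⟩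


/-- The key transfer lemma: matched coordinates have equal difference-floors, unmatched
coordinates have equal floors on each side; then being at `supDist` below/above 1 transfers. -/
lemma side_transfer {a : ℝ} {p q p' q' : ℕ → ℝ} (P : Finset (ℕ × ℕ))
    (hp : Tendsto p atTop (nhds a)) (hq : Tendsto q atTop (nhds a))
    (hp' : Tendsto p' atTop (nhds a)) (hq' : Tendsto q' atTop (nhds a))
    (hm : ∀ e ∈ P, ⌊p e.1 - q e.1⌋ = ⌊p' e.2 - q' e.2⌋)
    (hu : ∀ n, n ∉ P.image Prod.fst → ⌊p n⌋ = ⌊q n⌋)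
    (hu' : ∀ m, m ∉ P.image Prod.snd → ⌊p' m⌋ = ⌊q' m⌋)
    (hni : ∀ e ∈ P, ∀ z : ℤ, p e.1 - q e.1 ≠ (z:ℝ))
    (hni' : ∀ e ∈ P, ∀ z : ℤ, p' e.2 - q' e.2 ≠ (z:ℝ)) :
    (supDist p q < 1 ∧ supDist p' q' < 1) ∨ (1 < supDist p q ∧ 1 < supDist p' q') := by
  by_cases hfar : ∃ e ∈ P, 1 < |p e.1 - q e.1|
  · obtain ⟨e, heP, he⟩ := hfar
    refine Or.inr ⟨one_lt_supDist hp hq e.1 he, ?_⟩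
    refine one_lt_supDist hp' hq' e.2 ?_
    refine one_lt_abs_of_not (hni' e heP) ?_
    intro hlt
    have h1 := floor_mem_pair_of_abs_lt_one hlt
    rw [← hm e heP] at h1
    exact absurd (abs_lt_one_of_floor_pair (hni e heP) h1) (not_lt.2 he.le)
  · push_neg at hfar
    refine Or.inl ⟨?_, ?_⟩
    · refine supDist_lt_one hp hq (fun n => ?_)
      by_cases hn : n ∈ P.image Prod.fst
      · obtain ⟨e, heP, rfl⟩ := Finset.mem_image.1 hn
        rcases lt_or_eq_of_le (hfar e heP) with h | h
        · exact h
        · exfalso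
          rcases (abs_eq (by norm_num : (0:ℝ) ≤ 1)).1 h with h' | h'
          · exact hni e heP 1 (by exact_mod_cast h')
          · exact hni e heP (-1) (by push_cast; exact h')
      · exact abs_sub_lt_one_of_floor_eq (hu n hn)
    · refine supDist_lt_one hp' hq' (fun m => ?_)
      by_cases hmm : m ∈ P.image Prod.snd
      · obtain ⟨e, heP, rfl⟩ := Finset.mem_image.1 hmm
        have hVlt : |p e.1 - q e.1| < 1 := by
          rcases lt_or_eq_of_le (hfar e heP) with h | h
          · exact h
          · exfalso
            rcases (abs_eq (by norm_num : (0:ℝ) ≤ 1)).1 h with h' | h'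
            · exact hni e heP 1 (by exact_mod_cast h')
            · exact hni e heP (-1) (by push_cast; exact h')
        have h1 := floor_mem_pair_of_abs_lt_one hVlt
        rw [hm e heP] at h1
        exact abs_lt_one_of_floor_pair (hni' e heP) h1
      · exact abs_sub_lt_one_of_floor_eq (hu' m hmm)


lemma floor_eq_of_close {r s : ℝ} (h1 : |r - s| < Int.fract s) (h2 : |r - s| < 1 - Int.fract s) :
    ⌊r⌋ = ⌊s⌋ := by
  have hs : (⌊s⌋ : ℝ) + Int.fract s = s := Int.floor_add_fract s
  rw [abs_lt] at h1 h2
  refine Int.floor_eq_iff.2 ⟨?_, ?_⟩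
  · have := Int.fract_nonneg s; push_cast; linarith
  · have := Int.fract_lt_one s; push_cast; linarith

lemma fract_sub_fract_of_floor_eq {r s : ℝ} (h : ⌊r⌋ = ⌊s⌋) :
    Int.fract r - Int.fract s = r - s := by
  have e1 : Int.fract r = r - ⌊r⌋ := by rw [Int.fract]
  have e2 : Int.fract s = s - ⌊s⌋ := by rw [Int.fract]
  rw [e1, e2, h]; ring

lemma floor_neg_of_ni {r : ℝ} (h : ∀ z : ℤ, r ≠ (z:ℝ)) : ⌊-r⌋ = -⌊r⌋ - 1 := by
  have h1 : (⌊r⌋ : ℝ) ≤ r := Int.floor_le r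
  have h2 : r < ⌊r⌋ + 1 := Int.lt_floor_add_one r
  have h3 : (⌊r⌋ : ℝ) ≠ r := fun hh => h ⌊r⌋ hh.symm
  refine Int.floor_eq_iff.2 ⟨?_, ?_⟩ <;> push_cast
  · linarith
  · have : (⌊r⌋ : ℝ) < r := lt_of_le_of_ne h1 h3
    linarith

lemma fract_ne_of_ni {s t : ℝ} (h : ∀ z : ℤ, s - t ≠ (z:ℝ)) :
    Int.fract s ≠ Int.fract t := by
  intro he
  obtain ⟨z, hz⟩ := Int.fract_eq_fract.1 he
  exact h z hz

lemma floor_zero_of_Ioo {y : ℝ} (h : y ∈ Set.Ioo (0:ℝ) 1) : ⌊y⌋ = 0 := by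
  refine Int.floor_eq_iff.2 ⟨?_, ?_⟩ <;> push_cast
  · exact h.1.le
  · simpa using h.2

lemma fract_pos_of_ni {y : ℝ} (h : ∀ z : ℤ, y ≠ (z:ℝ)) : 0 < Int.fract y := by
  rcases lt_or_eq_of_le (Int.fract_nonneg y) with h' | h'
  · exact h'
  · exfalso
    have : y = (⌊y⌋ : ℝ) := by
      have := Int.floor_add_fract y; rw [← h'] at this; linarith
    exact h ⌊y⌋ this

/-- Uniform lower bound on distance of fractional parts to `{0,1}`, for a sequence tending
to `a ∈ (0,1)` with no integer values. -/
lemma unif_fract {a : ℝ} (ha : a ∈ Set.Ioo (0:ℝ) 1) {y : ℕ → ℝ}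
    (hy : Tendsto y atTop (nhds a)) (hni : ∀ m, ∀ z : ℤ, y m ≠ (z:ℝ)) :
    ∃ ρ > 0, ∀ m, ρ ≤ Int.fract (y m) ∧ ρ ≤ 1 - Int.fract (y m) := by
  have hmem : Set.Ioo (a/2) ((1+a)/2) ∈ nhds a := by
    refine Ioo_mem_nhds ?_ ?_ <;> [linarith [ha.1]; linarith [ha.2]]
  obtain ⟨T, hT⟩ := eventually_atTop.1 (hy.eventually hmem)
  have htail : ∀ m, T ≤ m → Int.fract (y m) = y m := by
    intro m hm
    refine Int.fract_eq_self.2 ⟨?_, ?_⟩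
    · have := (hT m hm).1; linarith [ha.1]
    · have := (hT m hm).2; linarith [ha.2]
  set ρt : ℝ := min (a/2) ((1-a)/2) with hρt
  have hρtpos : 0 < ρt := by
    rw [hρt]; rw [lt_min_iff]; constructor <;> linarith [ha.1, ha.2]
  set E : Finset ℝ := insert ρt (((Finset.range T).image
    (fun m => min (Int.fract (y m)) (1 - Int.fract (y m))))) with hE
  have hEne : E.Nonempty := ⟨ρt, Finset.mem_insert_self _ _⟩
  refine ⟨E.min' hEne, ?_, ?_⟩
  · have hmm := E.min'_mem hEne
    rcases Finset.mem_insert.1 hmm with h | h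
    · rw [h]; exact hρtpos
    · obtain ⟨m, _, hm⟩ := Finset.mem_image.1 h
      rw [← hm]
      refine lt_min ?_ ?_
      · exact fract_pos_of_ni (hni m)
      · linarith [Int.fract_lt_one (y m)]
  · intro m
    rcases le_or_gt T m with hm | hm
    · have h1 := htail m hm
      have h2 := (hT m hm).1
      have h3 := (hT m hm).2
      have hle : E.min' hEne ≤ ρt := Finset.min'_le _ _ (Finset.mem_insert_self _ _)
      constructor
      · rw [h1]; refine le_trans hle ?_
        refine le_trans (min_le_left _ _) ?_; linarith
      · rw [h1]; refine le_trans hle ?_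
        refine le_trans (min_le_right _ _) ?_; linarith
    · have hmem' : min (Int.fract (y m)) (1 - Int.fract (y m)) ∈ E := by
        rw [hE]
        exact Finset.mem_insert_of_mem (Finset.mem_image.2 ⟨m, Finset.mem_range.2 hm, rfl⟩)
      have hle := Finset.min'_le _ _ hmem'
      exact ⟨le_trans hle (min_le_left _ _), le_trans hle (min_le_right _ _)⟩


/-- Central construction: at one matched coordinate, given the floor-shift constancy and the
fract-order correspondence, one can choose a target value `ξ` (with a safety margin `ρ`) so
that any `r` close to `ξ` has the prescribed difference-floors, fract-order position and
non-integrality relative to the old `W`-side values. -/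
lemma xval_lemma (k : ℕ) (hk : 0 < k) (vvn wwm : ℕ → ℝ) (vstn : ℝ)
    (hc : ∀ i, i < k → (⌊wwm i⌋ : ℤ) - ⌊vvn i⌋ = ⌊wwm 0⌋ - ⌊vvn 0⌋)
    (hord : ∀ i j, i < k → j < k →
      (Int.fract (vvn i) < Int.fract (vvn j) ↔ Int.fract (wwm i) < Int.fract (wwm j)))
    (hniV : ∀ i, i < k → ∀ z : ℤ, vstn - vvn i ≠ (z:ℝ))
    (hniW : ∀ i, i < k → ∀ z : ℤ, wwm i ≠ (z:ℝ)) :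
    ∃ ξ ρ : ℝ, 0 < ρ ∧ ∀ r, |r - ξ| < ρ →
      (∀ i, i < k → ⌊r - wwm i⌋ = ⌊vstn - vvn i⌋) ∧
      (∀ i, i < k → ((Int.fract (vvn i) < Int.fract vstn ↔ Int.fract (wwm i) < Int.fract r) ∧
                     (Int.fract vstn < Int.fract (vvn i) ↔ Int.fract r < Int.fract (wwm i)))) ∧
      (∀ i, i < k → ∀ z : ℤ, r - wwm i ≠ (z:ℝ)) := by
  classical
  set α : ℕ → ℝ := fun i => Int.fract (vvn i) with hα
  set β : ℕ → ℝ := fun i => Int.fract (wwm i) with hβ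
  set αs : ℝ := Int.fract vstn with hαs
  have hαne : ∀ i, i < k → α i ≠ αs := by
    intro i hi
    exact fun h => (fract_ne_of_ni (hniV i hi)) (by rw [hαs] at h; rw [hα] at h; exact h.symm)
  set Lset : Finset ℝ := insert 0 (((Finset.range k).filter (fun i => α i < αs)).image β) with hLs
  set Rset : Finset ℝ := insert 1 (((Finset.range k).filter (fun i => αs < α i)).image β) with hRs
  have hLne : Lset.Nonempty := ⟨0, Finset.mem_insert_self _ _⟩
  have hRne : Rset.Nonempty := ⟨1, Finset.mem_insert_self _ _⟩
  set L : ℝ := Lset.max' hLne with hL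
  set R : ℝ := Rset.min' hRne with hR
  have hLmem : ∀ b ∈ Lset, b = 0 ∨ ∃ i, i < k ∧ α i < αs ∧ β i = b := by
    intro b hb
    rcases Finset.mem_insert.1 hb with h | h
    · exact Or.inl h
    · obtain ⟨i, hi, hib⟩ := Finset.mem_image.1 h
      rw [Finset.mem_filter, Finset.mem_range] at hi
      exact Or.inr ⟨i, hi.1, hi.2, hib⟩
  have hRmem : ∀ b ∈ Rset, b = 1 ∨ ∃ i, i < k ∧ αs < α i ∧ β i = b := by
    intro b hb
    rcases Finset.mem_insert.1 hb with h | h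
    · exact Or.inl h
    · obtain ⟨i, hi, hib⟩ := Finset.mem_image.1 h
      rw [Finset.mem_filter, Finset.mem_range] at hi
      exact Or.inr ⟨i, hi.1, hi.2, hib⟩
  have hβpos : ∀ i, i < k → 0 < β i := fun i hi => fract_pos_of_ni (hniW i hi)
  have hβlt1 : ∀ i, i < k → β i < 1 := fun i _ => Int.fract_lt_one _
  have hLR : L < R := by
    rw [hL, Finset.max'_lt_iff]
    intro b hb
    rw [hR, Finset.lt_min'_iff]
    intro t ht
    rcases hLmem b hb with rfl | ⟨i, hi, hia, rfl⟩
    · rcases hRmem t ht with rfl | ⟨j, hj, hja, rfl⟩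
      · norm_num
      · exact hβpos j hj
    · rcases hRmem t ht with rfl | ⟨j, hj, hja, rfl⟩
      · exact hβlt1 i hi
      · exact (hord i j hi hj).1 (lt_trans hia hja)
  have hL0 : 0 ≤ L := Finset.le_max' _ _ (Finset.mem_insert_self _ _)
  have hR1 : R ≤ 1 := Finset.min'_le _ _ (Finset.mem_insert_self _ _)
  have hLub : ∀ i, i < k → α i < αs → β i ≤ L := by
    intro i hi hia
    refine Finset.le_max' _ _ ?_
    exact Finset.mem_insert_of_mem (Finset.mem_image.2
      ⟨i, Finset.mem_filter.2 ⟨Finset.mem_range.2 hi, hia⟩, rfl⟩)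
  have hRlb : ∀ i, i < k → αs < α i → R ≤ β i := by
    intro i hi hia
    refine Finset.min'_le _ _ ?_
    exact Finset.mem_insert_of_mem (Finset.mem_image.2
      ⟨i, Finset.mem_filter.2 ⟨Finset.mem_range.2 hi, hia⟩, rfl⟩)
  set γ : ℝ := (L + R) / 2 with hγ
  have hγL : L < γ := by rw [hγ]; linarith
  have hγR : γ < R := by rw [hγ]; linarith
  have hγ0 : 0 < γ := lt_of_le_of_lt hL0 hγL
  have hγ1 : γ < 1 := lt_of_lt_of_le hγR hR1
  set ρ : ℝ := min (γ - L) (R - γ) with hρ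
  have hρpos : 0 < ρ := by rw [hρ]; exact lt_min (by linarith) (by linarith)
  set ξ : ℝ := ((⌊vstn⌋ + (⌊wwm 0⌋ - ⌊vvn 0⌋) : ℤ) : ℝ) + γ with hξ
  have hfracξ : Int.fract ξ = γ := by
    rw [hξ, Int.fract_intCast_add, Int.fract_eq_self.2 ⟨hγ0.le, hγ1⟩]
  have hfloorξ : ⌊ξ⌋ = ⌊vstn⌋ + (⌊wwm 0⌋ - ⌊vvn 0⌋) := by
    have hγfl : ⌊γ⌋ = 0 := floor_zero_of_Ioo ⟨hγ0, hγ1⟩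
    rw [hξ, Int.floor_intCast_add, hγfl]
    omega
  -- key: the difference ξ - wwm i
  have hdiff : ∀ i, i < k → ξ - wwm i = ((⌊vstn⌋ - ⌊vvn i⌋ : ℤ) : ℝ) + (γ - β i) := by
    intro i hi
    have hwi : (⌊wwm i⌋ : ℝ) + β i = wwm i := Int.floor_add_fract (wwm i)
    have hci := hc i hi
    rw [hξ]
    push_cast
    have : ((⌊wwm i⌋ : ℤ) : ℝ) = ((⌊vvn i⌋ : ℤ) : ℝ) + ((⌊wwm 0⌋ : ℤ) : ℝ) - ((⌊vvn 0⌋ : ℤ) : ℝ) := by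
      exact_mod_cast congrArg (fun z : ℤ => (z : ℝ)) (by omega : (⌊wwm i⌋ : ℤ) = ⌊vvn i⌋ + ⌊wwm 0⌋ - ⌊vvn 0⌋)
    rw [← hwi, this]
    push_cast
    ring
  have hγβ : ∀ i, i < k → (γ < β i ↔ αs < α i) := by
    intro i hi
    constructor
    · intro h
      rcases lt_trichotomy αs (α i) with h' | h' | h'
      · exact h'
      · exact absurd h'.symm (hαne i hi)
      · exact absurd (lt_of_le_of_lt (hLub i hi h') hγL) (not_lt.2 h.le)
    · intro h
      exact lt_of_lt_of_le hγR (hRlb i hi h)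
  have hγβ' : ∀ i, i < k → (β i < γ ↔ α i < αs) := by
    intro i hi
    constructor
    · intro h
      rcases lt_trichotomy (α i) αs with h' | h' | h'
      · exact h'
      · exact absurd h' (hαne i hi)
      · exact absurd (lt_of_lt_of_le hγR (hRlb i hi h')) (not_lt.2 h.le)
    · intro h
      exact lt_of_le_of_lt (hLub i hi h) hγL
  have hγβne : ∀ i, i < k → γ ≠ β i := by
    intro i hi h
    rcases lt_trichotomy (α i) αs with h' | h' | h'
    · exact absurd (h ▸ (hγβ' i hi).2 h') (lt_irrefl _)
    · exact hαne i hi h'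
    · exact absurd (h ▸ (hγβ i hi).2 h') (lt_irrefl _)
  -- floor and fract of the difference
  have hfldiff : ∀ i, i < k → ⌊ξ - wwm i⌋ = ⌊vstn - vvn i⌋ ∧
      ρ ≤ Int.fract (ξ - wwm i) ∧ ρ ≤ 1 - Int.fract (ξ - wwm i) := by
    intro i hi
    have hd := hdiff i hi
    have hβi0 := hβpos i hi
    have hβi1 := hβlt1 i hi
    have hsub : ⌊vstn - vvn i⌋ = ⌊vstn⌋ - ⌊vvn i⌋ -
        (if Int.fract vstn < Int.fract (vvn i) then 1 else 0) :=
      floor_sub_eq (Ne.symm (fun h => hαne i hi h))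
    by_cases hcase : αs < α i
    · -- γ < β i, fract of diff is 1 + γ - β i
      have hγβi : γ < β i := (hγβ i hi).2 hcase
      have hfl : ⌊ξ - wwm i⌋ = ⌊vstn⌋ - ⌊vvn i⌋ - 1 := by
        rw [hd]
        have : ⌊γ - β i⌋ = -1 := by
          refine Int.floor_eq_iff.2 ⟨?_, ?_⟩ <;> push_cast <;> linarith
        rw [add_comm, Int.floor_add_intCast]
        omega
      constructor
      · rw [hfl, hsub, if_pos (by rw [hαs, hα] at hcase; exact hcase)]
      · have hfr : Int.fract (ξ - wwm i) = 1 + γ - β i := by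
          have : Int.fract (ξ - wwm i) = (ξ - wwm i) - ⌊ξ - wwm i⌋ := by rw [Int.fract]
          rw [this, hfl, hd]
          push_cast
          ring
        rw [hfr]
        constructor
        · rw [hρ]; refine le_trans (min_le_left _ _) ?_; linarith
        · rw [hρ]
          refine le_trans (min_le_right _ _) ?_
          have := hRlb i hi hcase
          linarith
    · -- β i < γ (or i such that α i < αs); fract of diff is γ - β i
      have hcase' : α i < αs := by
        rcases lt_trichotomy (α i) αs with h' | h' | h'
        · exact h'
        · exact absurd h' (hαne i hi)
        · exact absurd h' hcase
      have hβγ : β i < γ := (hγβ' i hi).2 hcase'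
      have hfl : ⌊ξ - wwm i⌋ = ⌊vstn⌋ - ⌊vvn i⌋ := by
        rw [hd]
        have : ⌊γ - β i⌋ = 0 := by
          refine Int.floor_eq_iff.2 ⟨?_, ?_⟩ <;> push_cast <;> linarith
        rw [add_comm, Int.floor_add_intCast]
        omega
      constructor
      · rw [hfl, hsub, if_neg hcase]
        omega
      · have hfr : Int.fract (ξ - wwm i) = γ - β i := by
          have : Int.fract (ξ - wwm i) = (ξ - wwm i) - ⌊ξ - wwm i⌋ := by rw [Int.fract]
          rw [this, hfl, hd]
          push_cast
          ring
        rw [hfr]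
        constructor
        · rw [hρ]
          refine le_trans (min_le_left _ _) ?_
          have := hLub i hi hcase'
          linarith
        · rw [hρ]; refine le_trans (min_le_right _ _) ?_; linarith
  refine ⟨ξ, ρ, hρpos, fun r hr => ⟨?_, ?_, ?_⟩⟩
  · intro i hi
    obtain ⟨hfl, hm1, hm2⟩ := hfldiff i hi
    have : ⌊r - wwm i⌋ = ⌊ξ - wwm i⌋ := by
      refine floor_eq_of_close ?_ ?_
      · have : |r - wwm i - (ξ - wwm i)| = |r - ξ| := by ring_nf
        rw [this]; exact lt_of_lt_of_le hr hm1
      · have : |r - wwm i - (ξ - wwm i)| = |r - ξ| := by ring_nf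
        rw [this]; exact lt_of_lt_of_le hr hm2
    rw [this, hfl]
  · -- fract order of r
    have hflr : ⌊r⌋ = ⌊ξ⌋ := by
      refine floor_eq_of_close (lt_of_lt_of_le hr ?_) (lt_of_lt_of_le hr ?_)
      · rw [hfracξ, hρ]; refine le_trans (min_le_left _ _) ?_; linarith
      · rw [hfracξ, hρ]; refine le_trans (min_le_right _ _) ?_; linarith
    have hfrr : Int.fract r - γ = r - ξ := by
      rw [← hfracξ]; exact fract_sub_fract_of_floor_eq hflr
    have habs := abs_lt.1 hr
    have hfrL : L < Int.fract r := by
      have : ρ ≤ γ - L := by rw [hρ]; exact min_le_left _ _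
      linarith
    have hfrR : Int.fract r < R := by
      have : ρ ≤ R - γ := by rw [hρ]; exact min_le_right _ _
      linarith
    intro i hi
    constructor
    · constructor
      · intro h
        exact lt_of_le_of_lt (hLub i hi h) hfrL
      · intro h
        rcases lt_trichotomy (α i) αs with h' | h' | h'
        · exact h'
        · exact absurd h' (hαne i hi)
        · exact absurd (lt_of_lt_of_le hfrR (hRlb i hi h')) (not_lt.2 h.le)
    · constructor
      · intro h
        exact lt_of_lt_of_le hfrR (hRlb i hi h)
      · intro h
        rcases lt_trichotomy αs (α i) with h' | h' | h'
        · exact h'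
        · exact absurd h'.symm (hαne i hi)
        · exact absurd (lt_of_le_of_lt (hLub i hi h') hfrL) (not_lt.2 h.le)
  · intro i hi z hz
    obtain ⟨hfl, hm1, hm2⟩ := hfldiff i hi
    have hflr : ⌊r - wwm i⌋ = ⌊ξ - wwm i⌋ := by
      refine floor_eq_of_close ?_ ?_
      · have : |r - wwm i - (ξ - wwm i)| = |r - ξ| := by ring_nf
        rw [this]; exact lt_of_lt_of_le hr hm1
      · have : |r - wwm i - (ξ - wwm i)| = |r - ξ| := by ring_nf
        rw [this]; exact lt_of_lt_of_le hr hm2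
    -- r - wwm i is strictly above its floor
    have hlow : (⌊ξ - wwm i⌋ : ℝ) < r - wwm i := by
      have h1 : (⌊ξ - wwm i⌋ : ℝ) = (ξ - wwm i) - Int.fract (ξ - wwm i) := by
        have := Int.floor_add_fract (ξ - wwm i); linarith
      have := abs_lt.1 hr
      rw [h1]; linarith
    rw [hz] at hflr hlow
    rw [Int.floor_intCast] at hflr
    rw [hflr] at hlow
    exact absurd hlow (lt_irrefl _)


lemma c_const (k : ℕ) (vvn wwm : ℕ → ℝ)
    (hfl : ∀ i j, i < k → j < k → ⌊vvn i - vvn j⌋ = ⌊wwm i - wwm j⌋)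
    (hord : ∀ i j, i < k → j < k →
      (Int.fract (vvn i) < Int.fract (vvn j) ↔ Int.fract (wwm i) < Int.fract (wwm j)))
    (hniV : ∀ i j, i < k → j < k → i ≠ j → ∀ z : ℤ, vvn i - vvn j ≠ (z:ℝ))
    (hk : 0 < k) :
    ∀ i, i < k → (⌊wwm i⌋ : ℤ) - ⌊vvn i⌋ = ⌊wwm 0⌋ - ⌊vvn 0⌋ := by
  intro i hi
  rcases Nat.eq_zero_or_pos i with rfl | hipos
  · ring
  have hne : i ≠ 0 := Nat.pos_iff_ne_zero.1 hipos
  have hfrv : Int.fract (vvn i) ≠ Int.fract (vvn 0) := fract_ne_of_ni (hniV i 0 hi hk hne)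
  have hfrw : Int.fract (wwm i) ≠ Int.fract (wwm 0) := by
    intro h
    rcases lt_trichotomy (Int.fract (vvn i)) (Int.fract (vvn 0)) with h' | h' | h'
    · exact absurd ((hord i 0 hi hk).1 h') (h ▸ lt_irrefl _)
    · exact hfrv h'
    · exact absurd ((hord 0 i hk hi).1 h') (h ▸ lt_irrefl _)
  have e1 := floor_sub_eq hfrv
  have e2 := floor_sub_eq hfrw
  have e3 := hfl i 0 hi hk
  have hiff := hord i 0 hi hk
  by_cases hlt : Int.fract (vvn i) < Int.fract (vvn 0)
  · rw [if_pos hlt] at e1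
    rw [if_pos (hiff.1 hlt)] at e2
    omega
  · rw [if_neg hlt] at e1
    rw [if_neg (fun hh => hlt (hiff.2 hh))] at e2
    omega

/-- A finite partial isomorphism with coordinate-matching data. -/
structure PIso {V W : Set (ℕ → ℝ)} (G : SimpleGraph V) (H : SimpleGraph W) where
  k : ℕ
  v : ℕ → V
  w : ℕ → W
  P : Finset (ℕ × ℕ)
  injv : ∀ i j, i < k → j < k → v i = v j → i = j
  injw : ∀ i j, i < k → j < k → w i = w j → i = j
  adj : ∀ i j, i < k → j < k → (G.Adj (v i) (v j) ↔ H.Adj (w i) (w j))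
  injP1 : ∀ e ∈ P, ∀ e' ∈ P, e.1 = e'.1 → e = e'
  injP2 : ∀ e ∈ P, ∀ e' ∈ P, e.2 = e'.2 → e = e'
  bfl : ∀ i j, i < k → j < k → ∀ e ∈ P,
    ⌊(v i : ℕ → ℝ) e.1 - (v j : ℕ → ℝ) e.1⌋ = ⌊(w i : ℕ → ℝ) e.2 - (w j : ℕ → ℝ) e.2⌋
  bord : ∀ i j, i < k → j < k → ∀ e ∈ P,
    (Int.fract ((v i : ℕ → ℝ) e.1) < Int.fract ((v j : ℕ → ℝ) e.1) ↔
     Int.fract ((w i : ℕ → ℝ) e.2) < Int.fract ((w j : ℕ → ℝ) e.2))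
  cv : ∀ i j, i < k → j < k → ∀ n, n ∉ P.image Prod.fst →
    ⌊(v i : ℕ → ℝ) n⌋ = ⌊(v j : ℕ → ℝ) n⌋
  cw : ∀ i j, i < k → j < k → ∀ m, m ∉ P.image Prod.snd →
    ⌊(w i : ℕ → ℝ) m⌋ = ⌊(w j : ℕ → ℝ) m⌋

lemma image_swap_fst (P : Finset (ℕ × ℕ)) :
    (P.image Prod.swap).image Prod.fst = P.image Prod.snd := by
  rw [Finset.image_image]; rfl

lemma image_swap_snd (P : Finset (ℕ × ℕ)) :
    (P.image Prod.swap).image Prod.snd = P.image Prod.fst := by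
  rw [Finset.image_image]; rfl

def PIso.swap {V W : Set (ℕ → ℝ)} {G : SimpleGraph V} {H : SimpleGraph W}
    (S : PIso G H) : PIso H G where
  k := S.k
  v := S.w
  w := S.v
  P := S.P.image Prod.swap
  injv := S.injw
  injw := S.injv
  adj := fun i j hi hj => (S.adj i j hi hj).symm
  injP1 := by
    intro e he e' he' h
    obtain ⟨f, hf, rfl⟩ := Finset.mem_image.1 he
    obtain ⟨f', hf', rfl⟩ := Finset.mem_image.1 he'
    have : f = f' := S.injP2 f hf f' hf' h
    rw [this]
  injP2 := by
    intro e he e' he' h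
    obtain ⟨f, hf, rfl⟩ := Finset.mem_image.1 he
    obtain ⟨f', hf', rfl⟩ := Finset.mem_image.1 he'
    have : f = f' := S.injP1 f hf f' hf' h
    rw [this]
  bfl := by
    intro i j hi hj e he
    obtain ⟨f, hf, rfl⟩ := Finset.mem_image.1 he
    exact (S.bfl i j hi hj f hf).symm
  bord := by
    intro i j hi hj e he
    obtain ⟨f, hf, rfl⟩ := Finset.mem_image.1 he
    exact (S.bord i j hi hj f hf).symm
  cv := by
    intro i j hi hj n hn
    rw [image_swap_fst] at hn
    exact S.cw i j hi hj n hn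
  cw := by
    intro i j hi hj m hm
    rw [image_swap_snd] at hm
    exact S.cv i j hi hj m hm


lemma forth {a : ℝ} {V W : Set (ℕ → ℝ)} {G : SimpleGraph V} {H : SimpleGraph W}
    (ha : a ∈ Set.Ioo (0:ℝ) 1)
    (hVsub : ∀ x ∈ V, Tendsto x atTop (nhds a))
    (hWsub : ∀ x ∈ W, Tendsto x atTop (nhds a))
    (hWdense : ∀ x : ℕ → ℝ, Tendsto x atTop (nhds a) →
      ∀ ε : ℝ, 0 < ε → ∃ w ∈ W, supDist x w < ε)
    (hVidf : IDFSetA V) (hWidf : IDFSetA W) (hWiop : HasIOPSet W)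
    (hGt : Threshold1 G) (hHt : Threshold1 H) (hHgec : GEC H)
    (S : PIso G H) (vst : V) (hnew : ∀ i, i < S.k → S.v i ≠ vst) :
    ∃ S' : PIso G H, S'.k = S.k + 1 ∧ (∀ i, i < S.k → S'.v i = S.v i ∧ S'.w i = S.w i) ∧
      S'.v S.k = vst := by
  classical
  set k := S.k with hkdef
  rcases Nat.eq_zero_or_pos k with hk0 | hkpos
  · -- base case: no old points
    obtain ⟨w0, hw0W, -⟩ := hWdense (fun _ => a) tendsto_const_nhds 1 one_pos
    refine ⟨⟨k+1, fun i => if i < k then S.v i else vst,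
        fun i => if i < k then S.w i else ⟨w0, hw0W⟩, S.P,
        ?_, ?_, ?_, S.injP1, S.injP2, ?_, ?_, ?_, ?_⟩, rfl, ?_, ?_⟩
    · intro i j hi hj _; omega
    · intro i j hi hj _; omega
    · intro i j hi hj
      have : i = j := by omega
      subst this
      simp
    · intro i j hi hj e he
      have : i = j := by omega
      subst this
      simp
    · intro i j hi hj e he
      have : i = j := by omega
      subst this
      simp
    · intro i j hi hj n hn
      have : i = j := by omega
      subst this
      rfl
    · intro i j hi hj m hm
      have : i = j := by omega
      subst this
      rfl
    · intro i hi; omega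
    · simp
  · -- main case
    set vv : ℕ → ℕ → ℝ := fun i => (S.v i : ℕ → ℝ) with hvv
    set ww : ℕ → ℕ → ℝ := fun i => (S.w i : ℕ → ℝ) with hww
    set vsf : ℕ → ℝ := (vst : ℕ → ℝ) with hvsf
    have hvten : ∀ i, Tendsto (vv i) atTop (nhds a) := fun i => hVsub _ (S.v i).2
    have hwten : ∀ i, Tendsto (ww i) atTop (nhds a) := fun i => hWsub _ (S.w i).2
    have hvstten : Tendsto vsf atTop (nhds a) := hVsub _ vst.2
    have hvne : ∀ i, i < k → vv i ≠ vsf := by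
      intro i hi h
      exact hnew i hi (Subtype.ext h)
    have hniVst : ∀ i, i < k → ∀ n, ∀ z : ℤ, vsf n - vv i n ≠ (z:ℝ) := by
      intro i hi n z
      exact hVidf.2 vsf vst.2 (vv i) (S.v i).2 (fun h => hvne i hi h.symm) n z
    have hniVpair : ∀ i j, i < k → j < k → i ≠ j → ∀ n, ∀ z : ℤ, vv i n - vv j n ≠ (z:ℝ) := by
      intro i j hi hj hij n z
      refine hVidf.2 (vv i) (S.v i).2 (vv j) (S.v j).2 (fun h => hij (S.injv i j hi hj (Subtype.ext h))) n z
    have hniWpair : ∀ i j, i < k → j < k → i ≠ j → ∀ m, ∀ z : ℤ, ww i m - ww j m ≠ (z:ℝ) := by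
      intro i j hi hj hij m z
      refine hWidf.2 (ww i) (S.w i).2 (ww j) (S.w j).2 (fun h => hij (S.injw i j hi hj (Subtype.ext h))) m z
    have hniW0 : ∀ i, ∀ m, ∀ z : ℤ, ww i m ≠ (z:ℝ) := fun i m z => hWidf.1 (ww i) (S.w i).2 m z
    set Fv : Finset ℕ := S.P.image Prod.fst with hFv
    set Fw : Finset ℕ := S.P.image Prod.snd with hFw
    -- tail thresholds
    have hIoo : Set.Ioo (0:ℝ) 1 ∈ nhds a := Ioo_mem_nhds ha.1 ha.2
    obtain ⟨T0, hT0⟩ : ∃ T, ∀ n, T ≤ n → vsf n ∈ Set.Ioo (0:ℝ) 1 ∧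
        ∀ i ∈ Finset.range k, vv i n ∈ Set.Ioo (0:ℝ) 1 := by
      have h1 : ∀ᶠ n in atTop, vsf n ∈ Set.Ioo (0:ℝ) 1 := hvstten.eventually hIoo
      have h2 : ∀ᶠ n in atTop, ∀ i ∈ Finset.range k, vv i n ∈ Set.Ioo (0:ℝ) 1 :=
        (Filter.eventually_all_finset _).2 (fun i _ => (hvten i).eventually hIoo)
      obtain ⟨T, hT⟩ := eventually_atTop.1 (h1.and h2)
      exact ⟨T, fun n hn => hT n hn⟩
    obtain ⟨T1, hT1⟩ : ∃ T, ∀ m, T ≤ m → ∀ i ∈ Finset.range k, ww i m ∈ Set.Ioo (0:ℝ) 1 := by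
      have h2 : ∀ᶠ m in atTop, ∀ i ∈ Finset.range k, ww i m ∈ Set.Ioo (0:ℝ) 1 :=
        (Filter.eventually_all_finset _).2 (fun i _ => (hwten i).eventually hIoo)
      exact eventually_atTop.1 h2
    -- the set of new coordinates to be matched
    set D : Finset ℕ := (Finset.range T0).filter
      (fun n => n ∉ Fv ∧ ∃ i, i < k ∧ ⌊vsf n⌋ ≠ ⌊vv i n⌋) with hD
    have hDFv : ∀ n ∈ D, n ∉ Fv := fun n hn => (Finset.mem_filter.1 hn).2.1
    have hDcap : ∀ n, n ∉ Fv → n ∉ D → ∀ i, i < k → ⌊vsf n⌋ = ⌊vv i n⌋ := by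
      intro n hn hnD i hi
      by_cases hnT : n < T0
      · by_contra hne
        exact hnD (Finset.mem_filter.2 ⟨Finset.mem_range.2 hnT, hn, i, hi, hne⟩)
      · push_neg at hnT
        rw [floor_zero_of_Ioo (hT0 n hnT).1,
          floor_zero_of_Ioo ((hT0 n hnT).2 i (Finset.mem_range.2 hi))]
    -- fresh matched coordinates via the independent order property
    have hQex : ∀ (Dd : Finset ℕ), (∀ n ∈ Dd, n ∉ Fv) → ∀ (A : Finset ℕ), Fw ⊆ A →
        ∃ Q : Finset (ℕ × ℕ), Q.image Prod.fst = Dd ∧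
          (∀ e ∈ Q, e.2 ∉ A ∧ T1 ≤ e.2 ∧ ∀ i j, i < k → j < k →
            (Int.fract (vv i e.1) < Int.fract (vv j e.1) ↔
             Int.fract (ww i e.2) < Int.fract (ww j e.2))) ∧
          (∀ e ∈ Q, ∀ e' ∈ Q, e.2 = e'.2 → e = e') ∧
          (∀ e ∈ Q, ∀ e' ∈ Q, e.1 = e'.1 → e = e') := by
      intro Dd
      induction Dd using Finset.induction_on with
      | empty =>
        intro _ A _
        exact ⟨∅, by simp, by simp, by simp, by simp⟩
      | @insert n Dd' hnotin IH =>
        intro hmem A hFwA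
        obtain ⟨Q', hQ'fst, hQ'prop, hQ'snd, hQ'fstinj⟩ := IH (fun n' hn' => hmem n' (Finset.mem_insert_of_mem hn')) A hFwA
        -- sort the V-side fractional parts at coordinate n
        have hdist : ∀ i j : Fin k, i ≠ j →
            Int.fract (vv (i:ℕ) n) ≠ Int.fract (vv (j:ℕ) n) := by
          intro i j hij
          refine fract_ne_of_ni ?_
          exact hniVpair i j i.isLt j.isLt (fun h => hij (Fin.ext h)) n
        obtain ⟨σ, hσ⟩ := exists_sort_perm (fun i : Fin k => Int.fract (vv (i:ℕ) n)) hdist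
        -- apply the iop of W
        have hptsinj : Function.Injective (fun i : Fin k => ww (i:ℕ)) := by
          intro i j hij
          refine Fin.ext (S.injw i j i.isLt j.isLt (Subtype.ext hij))
        obtain ⟨m, hmA, hmT, hmord⟩ := iop_extract hWiop (fun i : Fin k => ww (i:ℕ))
          (fun i => (S.w (i:ℕ)).2) hptsinj σ (A ∪ Q'.image Prod.snd) T1
        have horder : ∀ i j, i < k → j < k →
            (Int.fract (vv i n) < Int.fract (vv j n) ↔
             Int.fract (ww i m) < Int.fract (ww j m)) := by
          intro i j hi hj
          have h1 := hσ (σ.symm ⟨i, hi⟩) (σ.symm ⟨j, hj⟩)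
          have h2 := hmord (σ.symm ⟨i, hi⟩) (σ.symm ⟨j, hj⟩)
          simp only [Equiv.apply_symm_apply] at h1 h2
          rw [← h1, ← h2]
        rw [Finset.mem_union, not_or] at hmA
        refine ⟨insert (n, m) Q', ?_, ?_, ?_, ?_⟩
        · rw [Finset.image_insert, hQ'fst]
        · intro e he
          rcases Finset.mem_insert.1 he with rfl | he'
          · exact ⟨hmA.1, hmT, horder⟩
          · exact hQ'prop e he'
        · intro e he e' he' hee
          rcases Finset.mem_insert.1 he with rfl | he2 <;>
            rcases Finset.mem_insert.1 he' with h3 | h3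
          · rw [h3]
          · exfalso
            have : e'.2 ∈ Q'.image Prod.snd := Finset.mem_image.2 ⟨e', h3, rfl⟩
            rw [← hee] at this
            exact hmA.2 this
          · exfalso
            have hm2 : e.2 ∈ Q'.image Prod.snd := Finset.mem_image.2 ⟨e, he2, rfl⟩
            rw [hee, h3] at hm2
            exact hmA.2 hm2
          · exact hQ'snd e he2 e' h3 hee
        · intro e he e' he' hee
          rcases Finset.mem_insert.1 he with rfl | he2 <;>
            rcases Finset.mem_insert.1 he' with h3 | h3
          · rw [h3]
          · exfalso
            have hm2 : e'.1 ∈ Finset.image Prod.fst Q' := Finset.mem_image.2 ⟨e', h3, rfl⟩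
            rw [← hee, hQ'fst] at hm2
            exact hnotin hm2
          · exfalso
            have hm2 : e.1 ∈ Finset.image Prod.fst Q' := Finset.mem_image.2 ⟨e, he2, rfl⟩
            rw [hee, h3, hQ'fst] at hm2
            exact hnotin hm2
          · exact hQ'fstinj e he2 e' h3 hee
    obtain ⟨Q, hQfst, hQprop, hQsnd, hQfstinj⟩ := hQex D hDFv Fw (le_refl _)
    set P' : Finset (ℕ × ℕ) := S.P ∪ Q with hP'
    have hQD : ∀ e ∈ Q, e.1 ∈ D := by
      intro e he
      rw [← hQfst]
      exact Finset.mem_image.2 ⟨e, he, rfl⟩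
    have hP'1 : ∀ e ∈ P', ∀ e' ∈ P', e.1 = e'.1 → e = e' := by
      intro e he e' he' h
      rcases Finset.mem_union.1 he with h1 | h1 <;> rcases Finset.mem_union.1 he' with h2 | h2
      · exact S.injP1 e h1 e' h2 h
      · exfalso
        refine hDFv e'.1 (hQD e' h2) ?_
        rw [hFv, ← h]
        exact Finset.mem_image.2 ⟨e, h1, rfl⟩
      · exfalso
        refine hDFv e.1 (hQD e h1) ?_
        rw [hFv, h]
        exact Finset.mem_image.2 ⟨e', h2, rfl⟩
      · exact hQfstinj e h1 e' h2 h
    have hP'2 : ∀ e ∈ P', ∀ e' ∈ P', e.2 = e'.2 → e = e' := by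
      intro e he e' he' h
      rcases Finset.mem_union.1 he with h1 | h1 <;> rcases Finset.mem_union.1 he' with h2 | h2
      · exact S.injP2 e h1 e' h2 h
      · exfalso
        refine (hQprop e' h2).1 ?_
        rw [hFw, ← h]
        exact Finset.mem_image.2 ⟨e, h1, rfl⟩
      · exfalso
        refine (hQprop e h1).1 ?_
        rw [hFw, h]
        exact Finset.mem_image.2 ⟨e', h2, rfl⟩
      · exact hQsnd e h1 e' h2 h
    -- coordinates not matched by P'
    have hunmV : ∀ n, n ∉ P'.image Prod.fst → n ∉ Fv ∧ n ∉ D := by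
      intro n hn
      constructor
      · intro hmem
        refine hn ?_
        rw [hP', Finset.image_union]
        exact Finset.mem_union_left _ hmem
      · intro hmem
        refine hn ?_
        rw [hP', Finset.image_union, hQfst]
        exact Finset.mem_union_right _ hmem
    have hunmW : ∀ m, m ∉ P'.image Prod.snd → m ∉ Fw := by
      intro m hm hmem
      refine hm ?_
      rw [hP', Finset.image_union]
      exact Finset.mem_union_left _ hmem
    -- unified per-coordinate facts for e ∈ P'
    have hordE : ∀ e ∈ P', ∀ i j, i < k → j < k →
        (Int.fract (vv i e.1) < Int.fract (vv j e.1) ↔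
         Int.fract (ww i e.2) < Int.fract (ww j e.2)) := by
      intro e he i j hi hj
      rcases Finset.mem_union.1 he with h1 | h1
      · exact S.bord i j hi hj e h1
      · exact (hQprop e h1).2.2 i j hi hj
    have hflE : ∀ e ∈ P', ∀ i j, i < k → j < k →
        ⌊vv i e.1 - vv j e.1⌋ = ⌊ww i e.2 - ww j e.2⌋ := by
      intro e he i j hi hj
      rcases Finset.mem_union.1 he with h1 | h1
      · exact S.bfl i j hi hj e h1
      · rcases Nat.decEq i j with hij | hij
        case isTrue => rw [hij]; simp
        have hflv : ⌊vv i e.1⌋ = ⌊vv j e.1⌋ := by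
          have h1' := hQD e h1
          have hni := hDFv e.1 h1'
          exact S.cv i j hi hj e.1 (by rw [← hFv]; exact hni)
        have hwIoo : ∀ l, l < k → ww l e.2 ∈ Set.Ioo (0:ℝ) 1 := by
          intro l hl
          exact hT1 e.2 (hQprop e h1).2.1 l (Finset.mem_range.2 hl)
        have hflw : ⌊ww i e.2⌋ = ⌊ww j e.2⌋ := by
          rw [floor_zero_of_Ioo (hwIoo i hi), floor_zero_of_Ioo (hwIoo j hj)]
        have e1 := floor_sub_eq (fract_ne_of_ni (hniVpair i j hi hj hij e.1))
        have e2 := floor_sub_eq (fract_ne_of_ni (hniWpair i j hi hj hij e.2))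
        have hiff := (hQprop e h1).2.2 i j hi hj
        by_cases hlt : Int.fract (vv i e.1) < Int.fract (vv j e.1)
        · rw [if_pos hlt] at e1
          rw [if_pos (hiff.1 hlt)] at e2
          omega
        · rw [if_neg hlt] at e1
          rw [if_neg (fun hh => hlt (hiff.2 hh))] at e2
          omega
    have hcE : ∀ e ∈ P', ∀ i, i < k →
        (⌊ww i e.2⌋ : ℤ) - ⌊vv i e.1⌋ = ⌊ww 0 e.2⌋ - ⌊vv 0 e.1⌋ := by
      intro e he
      refine c_const k (fun i => vv i e.1) (fun i => ww i e.2)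
        (fun i j hi hj => hflE e he i j hi hj)
        (fun i j hi hj => hordE e he i j hi hj)
        (fun i j hi hj hij z => hniVpair i j hi hj hij e.1 z) hkpos
    -- choose a target value and safety margin at each matched coordinate
    have hall : ∀ e : ℕ × ℕ, ∃ ξρ : ℝ × ℝ, 0 < ξρ.2 ∧ (e ∈ P' →
        ((∀ r, |r - ξρ.1| < ξρ.2 →
          (∀ i, i < k → ⌊r - ww i e.2⌋ = ⌊vsf e.1 - vv i e.1⌋) ∧
          (∀ i, i < k → ((Int.fract (vv i e.1) < Int.fract (vsf e.1) ↔
                          Int.fract (ww i e.2) < Int.fract r) ∧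
                         (Int.fract (vsf e.1) < Int.fract (vv i e.1) ↔
                          Int.fract r < Int.fract (ww i e.2)))) ∧
          (∀ i, i < k → ∀ z : ℤ, r - ww i e.2 ≠ (z:ℝ))))) := by
      intro e
      by_cases he : e ∈ P'
      · obtain ⟨ξ, ρ, hρ, hprop⟩ := xval_lemma k hkpos (fun i => vv i e.1) (fun i => ww i e.2)
          (vsf e.1) (hcE e he) (hordE e he)
          (fun i hi z => hniVst i hi e.1 z)
          (fun i hi z => hniW0 i e.2 z)
        exact ⟨(ξ, ρ), hρ, fun _ => hprop⟩
      · exact ⟨(0, 1), one_pos, fun h => absurd h he⟩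
    choose ξρ hρpos hprop using hall
    -- the target point x
    set x : ℕ → ℝ := fun m =>
      if h : ∃ e, e ∈ P' ∧ e.2 = m then (ξρ h.choose).1 else ww 0 m with hx
    have hxeq : ∀ e ∈ P', x e.2 = (ξρ e).1 := by
      intro e he
      have hex : ∃ e', e' ∈ P' ∧ e'.2 = e.2 := ⟨e, he, rfl⟩
      rw [hx]
      simp only [dif_pos hex]
      have := hex.choose_spec
      rw [hP'2 hex.choose this.1 e he this.2]
    have hxunm : ∀ m, m ∉ P'.image Prod.snd → x m = ww 0 m := by
      intro m hm
      rw [hx]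
      refine dif_neg ?_
      rintro ⟨e, he, rfl⟩
      exact hm (Finset.mem_image.2 ⟨e, he, rfl⟩)
    have hxten : Tendsto x atTop (nhds a) := by
      refine (hwten 0).congr' ?_
      have hB : ∀ m, (P'.image Prod.snd).sup id + 1 ≤ m → m ∉ P'.image Prod.snd := by
        intro m hm hmem
        have := Finset.le_sup (f := id) hmem
        simp only [id_eq] at this
        omega
      rw [Filter.eventuallyEq_iff_exists_mem]
      refine ⟨{m | (P'.image Prod.snd).sup id + 1 ≤ m}, mem_atTop _, fun m hm => ?_⟩
      exact (hxunm m (hB m hm)).symm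
    -- properties of x at matched coordinates (apply hprop with r = x e.2 itself)
    have hxprop : ∀ e ∈ P',
        (∀ i, i < k → ⌊x e.2 - ww i e.2⌋ = ⌊vsf e.1 - vv i e.1⌋) ∧
        (∀ i, i < k → ∀ z : ℤ, x e.2 - ww i e.2 ≠ (z:ℝ)) := by
      intro e he
      have h0 : |(ξρ e).1 - (ξρ e).1| < (ξρ e).2 := by
        simpa using hρpos e
      obtain ⟨hf, _, hni⟩ := hprop e he (ξρ e).1 h0
      rw [hxeq e he]
      exact ⟨hf, hni⟩
    -- distance trichotomy
    have hside : ∀ i, i < k →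
        (supDist vsf (vv i) < 1 ∧ supDist x (ww i) < 1) ∨
        (1 < supDist vsf (vv i) ∧ 1 < supDist x (ww i)) := by
      intro i hi
      refine side_transfer P' hvstten (hvten i) hxten (hwten i) ?_ ?_ ?_ ?_ ?_
      · intro e he
        exact ((hxprop e he).1 i hi).symm
      · intro n hn
        obtain ⟨h1, h2⟩ := hunmV n hn
        exact hDcap n h1 h2 i hi
      · intro m hm
        rw [hxunm m hm]
        refine S.cw 0 i hkpos hi m ?_
        rw [← hFw]
        exact hunmW m hm
      · intro e _ z
        exact hniVst i hi e.1 z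
      · intro e he z
        exact (hxprop e he).2 i hi z
    -- margin for unmatched coordinates
    obtain ⟨ρW, hρWpos, hρWb⟩ := unif_fract ha (hwten 0) (hniW0 0)
    -- global safety margin ε
    set dm : ℕ → ℝ := fun i => if supDist vsf (vv i) < 1
      then 1 - supDist x (ww i) else supDist x (ww i) - 1 with hdm
    have hdmpos : ∀ i, i < k → 0 < dm i := by
      intro i hi
      simp only [hdm]
      by_cases hnear : supDist vsf (vv i) < 1
      · rw [if_pos hnear]
        rcases hside i hi with ⟨_, h2⟩ | ⟨h1, _⟩
        · linarith
        · linarith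
      · rw [if_neg hnear]
        rcases hside i hi with ⟨h1, _⟩ | ⟨_, h2⟩
        · exact absurd h1 hnear
        · linarith
    set E : Finset ℝ := insert (1/2) (insert ρW
      ((P'.image (fun e => (ξρ e).2)) ∪
       ((Finset.range k).image dm))) with hE
    have hEne : E.Nonempty := ⟨1/2, Finset.mem_insert_self _ _⟩
    set ε : ℝ := E.min' hEne with hεdef
    have hεpos : 0 < ε := by
      have hmem := E.min'_mem hEne
      rw [← hεdef] at hmem
      rw [hE] at hmem
      rcases Finset.mem_insert.1 hmem with h | h
      · rw [h]; norm_num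
      rcases Finset.mem_insert.1 h with h' | h'
      · rw [h']; exact hρWpos
      rcases Finset.mem_union.1 h' with h'' | h''
      · obtain ⟨e, _, he⟩ := Finset.mem_image.1 h''
        rw [← he]; exact hρpos e
      · obtain ⟨i, hi, he⟩ := Finset.mem_image.1 h''
        rw [← he]; exact hdmpos i (Finset.mem_range.1 hi)
    have hεhalf : ε ≤ 1/2 := Finset.min'_le _ _ (Finset.mem_insert_self _ _)
    have hερW : ε ≤ ρW := Finset.min'_le _ _
      (Finset.mem_insert_of_mem (Finset.mem_insert_self _ _))
    have hερ : ∀ e ∈ P', ε ≤ (ξρ e).2 := by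
      intro e he
      refine Finset.min'_le _ _ ?_
      refine Finset.mem_insert_of_mem (Finset.mem_insert_of_mem ?_)
      exact Finset.mem_union_left _ (Finset.mem_image.2 ⟨e, he, rfl⟩)
    have hεdm : ∀ i, i < k → ε ≤ dm i := by
      intro i hi
      refine Finset.min'_le _ _ ?_
      refine Finset.mem_insert_of_mem (Finset.mem_insert_of_mem ?_)
      exact Finset.mem_union_right _ (Finset.mem_image.2 ⟨i, Finset.mem_range.2 hi, rfl⟩)
    -- density point near x
    obtain ⟨w0', hw0'W, hw0'd⟩ := hWdense x hxten (ε/2) (by linarith)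
    have hw0'ten : Tendsto w0' atTop (nhds a) := hWsub _ hw0'W
    -- the sets A and B for the g.e.c. property
    set Afs : Finset W := ((Finset.range k).filter
      (fun i => supDist vsf (vv i) < 1 ∧ G.Adj vst (S.v i))).image (fun i => S.w i) with hAfs
    set Bfs : Finset W := ((Finset.range k).filter
      (fun i => supDist vsf (vv i) < 1 ∧ ¬ G.Adj vst (S.v i))).image (fun i => S.w i) with hBfs
    have hABd : Disjoint Afs Bfs := by
      rw [Finset.disjoint_left]
      intro u hu hv
      obtain ⟨i, hi, hiu⟩ := Finset.mem_image.1 hu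
      obtain ⟨j, hj, hju⟩ := Finset.mem_image.1 hv
      rw [Finset.mem_filter, Finset.mem_range] at hi hj
      have : i = j := S.injw i j hi.1 hj.1 (by rw [hiu, hju])
      rw [this] at hi
      exact hj.2.2 hi.2.2
    have hABnear : ∀ u : W, u ∈ Afs ∨ u ∈ Bfs →
        ∃ i, i < k ∧ u = S.w i ∧ supDist vsf (vv i) < 1 := by
      intro u hu
      rcases hu with hu | hu <;>
      · obtain ⟨i, hi, hiu⟩ := Finset.mem_image.1 hu
        rw [Finset.mem_filter, Finset.mem_range] at hi
        exact ⟨i, hi.1, hiu.symm, hi.2.1⟩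
    have hball : ∀ u : W, u ∈ Afs ∨ u ∈ Bfs → supDist w0' (u : ℕ → ℝ) < 1 := by
      intro u hu
      obtain ⟨i, hi, rfl, hnear⟩ := hABnear u hu
      have hxw : supDist x (ww i) ≤ 1 - ε := by
        have := hεdm i hi
        simp only [hdm] at this
        rw [if_pos hnear] at this
        linarith
      have htri : supDist w0' (ww i) ≤ supDist w0' x + supDist x (ww i) :=
        supDist_triangle hw0'ten hxten (hwten i)
      rw [supDist_symm w0' x] at htri
      calc supDist w0' (ww i) ≤ supDist x w0' + supDist x (ww i) := htri
        _ < ε/2 + (1 - ε) := by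
            refine add_lt_add_of_lt_of_le hw0'd hxw
        _ < 1 := by linarith
    -- apply geometric existential closure
    obtain ⟨z, hzA, hzB, hzne, hzadjA, hzadjB, hzball, hzd⟩ :=
      hHgec (ε/2) (by linarith) (by linarith) ⟨w0', hw0'W⟩ Afs Bfs hABd hball
    set zf : ℕ → ℝ := (z : ℕ → ℝ) with hzf
    have hzten : Tendsto zf atTop (nhds a) := hWsub _ z.2
    have hxz : supDist x zf < ε := by
      have htri : supDist x zf ≤ supDist x w0' + supDist w0' zf :=
        supDist_triangle hxten hw0'ten hzten
      calc supDist x zf ≤ supDist x w0' + supDist w0' zf := htri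
        _ < ε/2 + ε/2 := add_lt_add hw0'd hzd
        _ = ε := by ring
    have hcoord : ∀ m, |zf m - x m| < ε := by
      intro m
      rw [abs_sub_comm]
      exact lt_of_le_of_lt (coord_le_supDist hxten hzten m) hxz
    -- distances from z to the old points
    have hzfarlem : ∀ i, i < k → ¬ supDist vsf (vv i) < 1 → 1 < supDist zf (ww i) := by
      intro i hi hnear
      have hd : 1 + ε ≤ supDist x (ww i) := by
        have := hεdm i hi
        simp only [hdm] at this
        rw [if_neg hnear] at this
        linarith
      have htri : supDist x (ww i) ≤ supDist x zf + supDist zf (ww i) :=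
        supDist_triangle hxten hzten (hwten i)
      linarith
    have hznearlem : ∀ i, i < k → supDist vsf (vv i) < 1 → supDist zf (ww i) < 1 := by
      intro i hi hnear
      have hd : supDist x (ww i) ≤ 1 - ε := by
        have := hεdm i hi
        simp only [hdm] at this
        rw [if_pos hnear] at this
        linarith
      have htri : supDist zf (ww i) ≤ supDist zf x + supDist x (ww i) :=
        supDist_triangle hzten hxten (hwten i)
      rw [supDist_symm zf x] at htri
      linarith
    have hwmem : ∀ i, i < k → supDist vsf (vv i) < 1 → S.w i ∈ Afs ∨ S.w i ∈ Bfs := by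
      intro i hi hnear
      by_cases hadj : G.Adj vst (S.v i)
      · exact Or.inl (Finset.mem_image.2 ⟨i, Finset.mem_filter.2
          ⟨Finset.mem_range.2 hi, hnear, hadj⟩, rfl⟩)
      · exact Or.inr (Finset.mem_image.2 ⟨i, Finset.mem_filter.2
          ⟨Finset.mem_range.2 hi, hnear, hadj⟩, rfl⟩)
    have hzneq : ∀ i, i < k → z ≠ S.w i := by
      intro i hi hzw
      by_cases hnear : supDist vsf (vv i) < 1
      · rcases hwmem i hi hnear with h | h
        · exact hzA (hzw ▸ h)
        · exact hzB (hzw ▸ h)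
      · have h1 := hzfarlem i hi hnear
        have : supDist zf (ww i) = 0 := by
          have : zf = ww i := by rw [hzf, hzw, hww]
          rw [this]
          unfold supDist
          simp
        linarith
    have hadjzw : ∀ i, i < k → (G.Adj vst (S.v i) ↔ H.Adj z (S.w i)) := by
      intro i hi
      by_cases hnear : supDist vsf (vv i) < 1
      · by_cases hadj : G.Adj vst (S.v i)
        · refine iff_of_true hadj ?_
          refine hzadjA _ (Finset.mem_image.2 ⟨i, Finset.mem_filter.2
            ⟨Finset.mem_range.2 hi, hnear, hadj⟩, rfl⟩)
        · refine iff_of_false hadj ?_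
          refine hzadjB _ (Finset.mem_image.2 ⟨i, Finset.mem_filter.2
            ⟨Finset.mem_range.2 hi, hnear, hadj⟩, rfl⟩)
      · refine iff_of_false ?_ ?_
        · intro hadj
          exact hnear (hGt vst (S.v i) hadj)
        · intro hadj
          have := hHt z (S.w i) hadj
          exact absurd this (not_lt.2 (hzfarlem i hi hnear).le)
    -- coordinatewise facts for z
    have hzclose : ∀ e ∈ P', |zf e.2 - (ξρ e).1| < (ξρ e).2 := by
      intro e he
      rw [← hxeq e he]
      exact lt_of_lt_of_le (hcoord e.2) (hερ e he)
    have hzfl : ∀ e ∈ P', ∀ i, i < k → ⌊zf e.2 - ww i e.2⌋ = ⌊vsf e.1 - vv i e.1⌋ :=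
      fun e he i hi => ((hprop e he (zf e.2) (hzclose e he)).1 i hi)
    have hzord : ∀ e ∈ P', ∀ i, i < k →
        ((Int.fract (vv i e.1) < Int.fract (vsf e.1) ↔
          Int.fract (ww i e.2) < Int.fract (zf e.2)) ∧
         (Int.fract (vsf e.1) < Int.fract (vv i e.1) ↔
          Int.fract (zf e.2) < Int.fract (ww i e.2))) :=
      fun e he i hi => ((hprop e he (zf e.2) (hzclose e he)).2.1 i hi)
    have hzni : ∀ e ∈ P', ∀ i, i < k → ∀ zz : ℤ, zf e.2 - ww i e.2 ≠ (zz:ℝ) :=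
      fun e he i hi => ((hprop e he (zf e.2) (hzclose e he)).2.2 i hi)
    have hzunm : ∀ m, m ∉ P'.image Prod.snd → ⌊zf m⌋ = ⌊ww 0 m⌋ := by
      intro m hm
      refine floor_eq_of_close ?_ ?_
      · have h1 := (hρWb m).1
        have h2 := hcoord m
        rw [hxunm m hm] at h2
        exact lt_of_lt_of_le h2 (le_trans hερW h1)
      · have h1 := (hρWb m).2
        have h2 := hcoord m
        rw [hxunm m hm] at h2
        exact lt_of_lt_of_le h2 (le_trans hερW h1)
    -- assemble the extended partial isomorphism
    refine ⟨⟨k+1, fun i => if i < k then S.v i else vst,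
        fun i => if i < k then S.w i else z, P', ?_, ?_, ?_, hP'1, hP'2, ?_, ?_, ?_, ?_⟩,
        rfl, ?_, ?_⟩
    · -- injv
      intro i j hi hj hij
      by_cases hi' : i < k <;> by_cases hj' : j < k
      · simp only [if_pos hi', if_pos hj'] at hij
        exact S.injv i j hi' hj' hij
      · simp only [if_pos hi', if_neg hj'] at hij
        exact absurd hij (hnew i hi')
      · simp only [if_neg hi', if_pos hj'] at hij
        exact absurd hij.symm (hnew j hj')
      · omega
    · -- injw
      intro i j hi hj hij
      by_cases hi' : i < k <;> by_cases hj' : j < k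
      · simp only [if_pos hi', if_pos hj'] at hij
        exact S.injw i j hi' hj' hij
      · simp only [if_pos hi', if_neg hj'] at hij
        exact absurd hij.symm (hzneq i hi')
      · simp only [if_neg hi', if_pos hj'] at hij
        exact absurd hij (hzneq j hj')
      · omega
    · -- adj
      intro i j hi hj
      by_cases hi' : i < k <;> by_cases hj' : j < k
      · simp only [if_pos hi', if_pos hj']
        exact S.adj i j hi' hj'
      · simp only [if_pos hi', if_neg hj']
        constructor
        · intro h
          exact ((hadjzw i hi').1 h.symm).symm
        · intro h
          exact ((hadjzw i hi').2 h.symm).symm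
      · simp only [if_neg hi', if_pos hj']
        exact hadjzw j hj'
      · simp only [if_neg hi', if_neg hj']
        exact iff_of_false (G.loopless.irrefl _) (H.loopless.irrefl _)
    · -- bfl
      intro i j hi hj e he
      by_cases hi' : i < k <;> by_cases hj' : j < k
      · simp only [if_pos hi', if_pos hj']
        exact hflE e he i j hi' hj'
      · simp only [if_pos hi', if_neg hj']
        have h1 := hzfl e he i hi'
        have h2 : vv i e.1 - vsf e.1 = -(vsf e.1 - vv i e.1) := by ring
        have h3 : ww i e.2 - zf e.2 = -(zf e.2 - ww i e.2) := by ring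
        rw [h2, h3, floor_neg_of_ni (hniVst i hi' e.1), floor_neg_of_ni (hzni e he i hi'), h1]
      · simp only [if_neg hi', if_pos hj']
        exact (hzfl e he j hj').symm
      · simp only [if_neg hi', if_neg hj']
        simp
    · -- bord
      intro i j hi hj e he
      by_cases hi' : i < k <;> by_cases hj' : j < k
      · simp only [if_pos hi', if_pos hj']
        exact hordE e he i j hi' hj'
      · simp only [if_pos hi', if_neg hj']
        exact (hzord e he i hi').1
      · simp only [if_neg hi', if_pos hj']
        exact (hzord e he j hj').2
      · simp only [if_neg hi', if_neg hj']
        exact iff_of_false (lt_irrefl _) (lt_irrefl _)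
    · -- cv
      intro i j hi hj n hn
      obtain ⟨hn1, hn2⟩ := hunmV n hn
      by_cases hi' : i < k <;> by_cases hj' : j < k
      · simp only [if_pos hi', if_pos hj']
        exact S.cv i j hi' hj' n (by rw [← hFv]; exact hn1)
      · simp only [if_pos hi', if_neg hj']
        exact (hDcap n hn1 hn2 i hi').symm
      · simp only [if_neg hi', if_pos hj']
        exact hDcap n hn1 hn2 j hj'
      · simp only [if_neg hi', if_neg hj']
    · -- cw
      intro i j hi hj m hm
      have hmFw := hunmW m hm
      by_cases hi' : i < k <;> by_cases hj' : j < k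
      · simp only [if_pos hi', if_pos hj']
        exact S.cw i j hi' hj' m (by rw [← hFw]; exact hmFw)
      · simp only [if_pos hi', if_neg hj']
        show ⌊ww i m⌋ = ⌊zf m⌋
        rw [hzunm m hm]
        exact S.cw i 0 hi' hkpos m (by rw [← hFw]; exact hmFw)
      · simp only [if_neg hi', if_pos hj']
        show ⌊zf m⌋ = ⌊ww j m⌋
        rw [hzunm m hm]
        exact S.cw 0 j hkpos hj' m (by rw [← hFw]; exact hmFw)
      · simp only [if_neg hi', if_neg hj']
    · -- extension of old points
      intro i hi
      refine ⟨?_, ?_⟩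
      · show (if i < k then S.v i else vst) = S.v i
        rw [if_pos hi]
      · show (if i < k then S.w i else z) = S.w i
        rw [if_pos hi]
    · -- the new vertex
      show (if k < k then S.v k else vst) = vst
      rw [if_neg (lt_irrefl k)]


end Aux

/-- for `a ∈ (0,1)`, any two g.e.c. geometric 1-graphs on dense countable
i.d.f. subsets of `c_a` satisfying the independent order property are isomorphic. -/
theorem iso_of_gec_geometric_one_graphs_cA
    (a : ℝ) (ha : a ∈ Set.Ioo (0 : ℝ) 1)
    (V W : Set (ℕ → ℝ)) (hVc : V.Countable) (hWc : W.Countable)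
    (hVsub : ∀ x ∈ V, Tendsto x atTop (nhds a))
    (hWsub : ∀ x ∈ W, Tendsto x atTop (nhds a))
    (hVdense : ∀ x : ℕ → ℝ, Tendsto x atTop (nhds a) →
      ∀ ε : ℝ, 0 < ε → ∃ v ∈ V, supDist x v < ε)
    (hWdense : ∀ x : ℕ → ℝ, Tendsto x atTop (nhds a) →
      ∀ ε : ℝ, 0 < ε → ∃ w ∈ W, supDist x w < ε)
    (hVidf : IDFSetA V) (hWidf : IDFSetA W)
    (hViop : HasIOPSet V) (hWiop : HasIOPSet W)
    (G : SimpleGraph V) (H : SimpleGraph W)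
    (hGt : Threshold1 G) (hHt : Threshold1 H)
    (hGgec : GEC G) (hHgec : GEC H) :
    Nonempty (G ≃g H) := by
  classical
  -- nonemptiness and enumerations
  obtain ⟨v00, hv00, -⟩ := hVdense (fun _ => a) tendsto_const_nhds 1 one_pos
  obtain ⟨w00, hw00, -⟩ := hWdense (fun _ => a) tendsto_const_nhds 1 one_pos
  obtain ⟨fV0, hfV0⟩ := hVc.exists_eq_range ⟨v00, hv00⟩
  obtain ⟨fW0, hfW0⟩ := hWc.exists_eq_range ⟨w00, hw00⟩
  set fV : ℕ → V := fun n => ⟨fV0 n, by rw [hfV0]; exact ⟨n, rfl⟩⟩ with hfV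
  set fW : ℕ → W := fun n => ⟨fW0 n, by rw [hfW0]; exact ⟨n, rfl⟩⟩ with hfW
  have hfVsurj : ∀ u : V, ∃ n, fV n = u := by
    intro u
    have h2 : (u : ℕ → ℝ) ∈ Set.range fV0 := by rw [← hfV0]; exact u.2
    obtain ⟨n, hn⟩ := h2
    exact ⟨n, Subtype.ext hn⟩
  have hfWsurj : ∀ u : W, ∃ n, fW n = u := by
    intro u
    have h2 : (u : ℕ → ℝ) ∈ Set.range fW0 := by rw [← hfW0]; exact u.2
    obtain ⟨n, hn⟩ := h2
    exact ⟨n, Subtype.ext hn⟩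
  -- initial empty partial isomorphism
  set init : PIso G H := ⟨0, fun _ => ⟨v00, hv00⟩, fun _ => ⟨w00, hw00⟩, ∅,
    fun i j hi _ _ => absurd hi (Nat.not_lt_zero i),
    fun i j hi _ _ => absurd hi (Nat.not_lt_zero i),
    fun i j hi _ => absurd hi (Nat.not_lt_zero i),
    fun e he => absurd he (Finset.notMem_empty e),
    fun e he => absurd he (Finset.notMem_empty e),
    fun i j hi _ => absurd hi (Nat.not_lt_zero i),
    fun i j hi _ => absurd hi (Nat.not_lt_zero i),
    fun i j hi _ => absurd hi (Nat.not_lt_zero i),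
    fun i j hi _ => absurd hi (Nat.not_lt_zero i)⟩ with hinit
  -- one-step extensions
  have hstepV : ∀ (S : PIso G H) (u : V), ∃ S' : PIso G H, S.k ≤ S'.k ∧
      (∀ i, i < S.k → S'.v i = S.v i ∧ S'.w i = S.w i) ∧ ∃ i, i < S'.k ∧ S'.v i = u := by
    intro S u
    by_cases h : ∃ i, i < S.k ∧ S.v i = u
    · exact ⟨S, le_refl _, fun i _ => ⟨rfl, rfl⟩, h⟩
    · push_neg at h
      obtain ⟨S', hk, hext, hval⟩ := forth ha hVsub hWsub hWdense hVidf hWidf hWiop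
        hGt hHt hHgec S u h
      exact ⟨S', by omega, hext, S.k, by omega, hval⟩
  have hstepW : ∀ (S : PIso G H) (u : W), ∃ S' : PIso G H, S.k ≤ S'.k ∧
      (∀ i, i < S.k → S'.v i = S.v i ∧ S'.w i = S.w i) ∧ ∃ i, i < S'.k ∧ S'.w i = u := by
    intro S u
    by_cases h : ∃ i, i < S.k ∧ S.w i = u
    · exact ⟨S, le_refl _, fun i _ => ⟨rfl, rfl⟩, h⟩
    · push_neg at h
      obtain ⟨T', hk, hext, hval⟩ := forth ha hWsub hVsub hVdense hWidf hVidf hViop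
        hHt hGt hGgec S.swap u h
      have hsk : S.swap.k = S.k := rfl
      refine ⟨T'.swap, ?_, ?_, S.k, ?_, ?_⟩
      · show S.k ≤ T'.k
        omega
      · intro i hi
        exact ⟨(hext i hi).2, (hext i hi).1⟩
      · show S.k < T'.k
        omega
      · exact hval
  -- the combined step
  have hstep : ∀ (t : ℕ) (S : PIso G H), ∃ S' : PIso G H, S.k ≤ S'.k ∧
      (∀ i, i < S.k → S'.v i = S.v i ∧ S'.w i = S.w i) ∧
      (if Even t then ∃ i, i < S'.k ∧ S'.v i = fV (t/2) else ∃ i, i < S'.k ∧ S'.w i = fW (t/2)) := by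
    intro t S
    by_cases ht : Even t
    · obtain ⟨S', h1, h2, h3⟩ := hstepV S (fV (t/2))
      exact ⟨S', h1, h2, by rw [if_pos ht]; exact h3⟩
    · obtain ⟨S', h1, h2, h3⟩ := hstepW S (fW (t/2))
      exact ⟨S', h1, h2, by rw [if_neg ht]; exact h3⟩
  choose step hstep1 hstep2 hstep3 using hstep
  set Sq : ℕ → PIso G H := fun t => Nat.rec init (fun t S => step t S) t with hSq
  have hSqsucc : ∀ t, Sq (t+1) = step t (Sq t) := fun t => rfl
  -- monotonicity
  have hmono : ∀ t t', t ≤ t' → (Sq t).k ≤ (Sq t').k ∧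
      (∀ i, i < (Sq t).k → (Sq t').v i = (Sq t).v i ∧ (Sq t').w i = (Sq t).w i) := by
    intro t t' htt
    induction t' with
    | zero =>
      have : t = 0 := by omega
      rw [this]
      exact ⟨le_refl _, fun i _ => ⟨rfl, rfl⟩⟩
    | succ t'' IH =>
      rcases Nat.lt_or_ge t (t''+1) with h | h
      · have h' : t ≤ t'' := by omega
        obtain ⟨IH1, IH2⟩ := IH h'
        rw [hSqsucc t'']
        refine ⟨le_trans IH1 (hstep1 t'' (Sq t'')), fun i hi => ?_⟩
        obtain ⟨e1, e2⟩ := hstep2 t'' (Sq t'') i (lt_of_lt_of_le hi IH1)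
        obtain ⟨e3, e4⟩ := IH2 i hi
        exact ⟨by rw [e1, e3], by rw [e2, e4]⟩
      · have : t = t'' + 1 := by omega
        rw [this]
        exact ⟨le_refl _, fun i _ => ⟨rfl, rfl⟩⟩
  -- coverage
  have hcovV : ∀ u : V, ∃ t i, i < (Sq t).k ∧ (Sq t).v i = u := by
    intro u
    obtain ⟨s, hs⟩ := hfVsurj u
    have h3 := hstep3 (2*s) (Sq (2*s))
    rw [if_pos (even_two_mul s)] at h3
    obtain ⟨i, hi, hv⟩ := h3
    refine ⟨2*s+1, i, ?_, ?_⟩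
    · rw [hSqsucc]; exact hi
    · rw [hSqsucc, hv]
      have : (2*s)/2 = s := by omega
      rw [this, hs]
  have hcovW : ∀ u : W, ∃ t i, i < (Sq t).k ∧ (Sq t).w i = u := by
    intro u
    obtain ⟨s, hs⟩ := hfWsurj u
    have h3 := hstep3 (2*s+1) (Sq (2*s+1))
    rw [if_neg (by simp [Nat.even_add_one, parity_simps])] at h3
    obtain ⟨i, hi, hv⟩ := h3
    refine ⟨2*s+2, i, ?_, ?_⟩
    · rw [show 2*s+2 = (2*s+1)+1 by omega, hSqsucc]; exact hi
    · rw [show 2*s+2 = (2*s+1)+1 by omega, hSqsucc, hv]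
      have : (2*s+1)/2 = s := by omega
      rw [this, hs]
  -- stability
  have hstable : ∀ t t' i i', i < (Sq t).k → i' < (Sq t').k →
      (Sq t).v i = (Sq t').v i' → (Sq t).w i = (Sq t').w i' := by
    intro t t' i i' hi hi' hv
    set T := max t t' with hT
    obtain ⟨hk1, he1⟩ := hmono t T (le_max_left _ _)
    obtain ⟨hk2, he2⟩ := hmono t' T (le_max_right _ _)
    have hiT : i < (Sq T).k := lt_of_lt_of_le hi hk1
    have hi'T : i' < (Sq T).k := lt_of_lt_of_le hi' hk2
    have hvT : (Sq T).v i = (Sq T).v i' := by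
      rw [(he1 i hi).1, (he2 i' hi').1, hv]
    have hii : i = i' := (Sq T).injv i i' hiT hi'T hvT
    have : (Sq T).w i = (Sq T).w i' := by rw [hii]
    rw [(he1 i hi).2, (he2 i' hi').2] at this
    exact this
  have hstablev : ∀ t t' i i', i < (Sq t).k → i' < (Sq t').k →
      (Sq t).w i = (Sq t').w i' → (Sq t).v i = (Sq t').v i' := by
    intro t t' i i' hi hi' hv
    set T := max t t' with hT
    obtain ⟨hk1, he1⟩ := hmono t T (le_max_left _ _)
    obtain ⟨hk2, he2⟩ := hmono t' T (le_max_right _ _)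
    have hiT : i < (Sq T).k := lt_of_lt_of_le hi hk1
    have hi'T : i' < (Sq T).k := lt_of_lt_of_le hi' hk2
    have hvT : (Sq T).w i = (Sq T).w i' := by
      rw [(he1 i hi).2, (he2 i' hi').2, hv]
    have hii : i = i' := (Sq T).injw i i' hiT hi'T hvT
    have : (Sq T).v i = (Sq T).v i' := by rw [hii]
    rw [(he1 i hi).1, (he2 i' hi').1] at this
    exact this
  -- the global maps
  have hΦex : ∀ u : V, ∃ wv : W, ∀ t i, i < (Sq t).k → (Sq t).v i = u → (Sq t).w i = wv := by
    intro u
    obtain ⟨t0, i0, hi0, hv0⟩ := hcovV u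
    refine ⟨(Sq t0).w i0, fun t i hi hv => ?_⟩
    exact hstable t t0 i i0 hi hi0 (by rw [hv, hv0])
  have hΨex : ∀ u : W, ∃ wv : V, ∀ t i, i < (Sq t).k → (Sq t).w i = u → (Sq t).v i = wv := by
    intro u
    obtain ⟨t0, i0, hi0, hv0⟩ := hcovW u
    refine ⟨(Sq t0).v i0, fun t i hi hv => ?_⟩
    exact hstablev t t0 i i0 hi hi0 (by rw [hv, hv0])
  choose Φ hΦ using hΦex
  choose Ψ hΨ using hΨex
  have hleft : ∀ u : V, Ψ (Φ u) = u := by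
    intro u
    obtain ⟨t, i, hi, hv⟩ := hcovV u
    have h1 := hΦ u t i hi hv
    have h2 := hΨ (Φ u) t i hi h1
    rw [← h2, hv]
  have hright : ∀ u : W, Φ (Ψ u) = u := by
    intro u
    obtain ⟨t, i, hi, hv⟩ := hcovW u
    have h1 := hΨ u t i hi hv
    have h2 := hΦ (Ψ u) t i hi h1
    rw [← h2, hv]
  have hadjiff : ∀ u u' : V, G.Adj u u' ↔ H.Adj (Φ u) (Φ u') := by
    intro u u'
    obtain ⟨t, i, hi, hv⟩ := hcovV u
    obtain ⟨t', i', hi', hv'⟩ := hcovV u'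
    set T := max t t' with hT
    obtain ⟨hk1, he1⟩ := hmono t T (le_max_left _ _)
    obtain ⟨hk2, he2⟩ := hmono t' T (le_max_right _ _)
    have hiT : i < (Sq T).k := lt_of_lt_of_le hi hk1
    have hi'T : i' < (Sq T).k := lt_of_lt_of_le hi' hk2
    have hvT : (Sq T).v i = u := by rw [(he1 i hi).1, hv]
    have hv'T : (Sq T).v i' = u' := by rw [(he2 i' hi').1, hv']
    have hΦu : (Sq T).w i = Φ u := hΦ u T i hiT hvT
    have hΦu' : (Sq T).w i' = Φ u' := hΦ u' T i' hi'T hv'T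
    have hadj := (Sq T).adj i i' hiT hi'T
    rw [hvT, hv'T, hΦu, hΦu'] at hadj
    exact hadj
  exact ⟨⟨⟨Φ, Ψ, hleft, hright⟩, fun {u u'} => (hadjiff u u').symm⟩⟩
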